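/- arXiv:2105.14841 — 3 statements merged into one kernel-verified Lean document; each statement's English description precedes it below -/
import Mathlib

section
/- Let p be a prime and k a positive integer with p > k. For all integers r ≥ 0 and m ≥ 1 with r + ⌈m/p⌉ ≥ k + 1, the p-adic valuation of p^r · (m-1)! / (r! · (⌈m/p⌉-1)!) is at least k. -/
/-- For a prime `p` and `0 < k < p`, whenever `r + ⌈m/p⌉ ≥ k + 1` (with `m ≥ 1`),
the `p`-adic valuation of `p^r * (m-1)! / (r! * (⌈m/p⌉ - 1)!)` is at least `k`. -/
theorem stmt0 (p k : ℕ) (hp : p.Prime) (hk : 0 < k) (hkp : k < p)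
    (r m : ℕ) (hm : 1 ≤ m) (h : k + 1 ≤ r + (m ⌈/⌉ p)) :
    (k : ℤ) ≤ padicValRat p
      ((p : ℚ) ^ r * (Nat.factorial (m - 1)) /
        (Nat.factorial r * Nat.factorial ((m ⌈/⌉ p) - 1))) := by
  haveI : Fact p.Prime := ⟨hp⟩
  set q := m ⌈/⌉ p with hqdef
  have hppos : 0 < p := hp.pos
  have hmpq : m ≤ p * q := by
    simpa using le_smul_ceilDiv (b := m) hppos
  have hq1 : 1 ≤ q := by
    rcases Nat.eq_zero_or_pos q with h0 | h0
    · rw [h0, Nat.mul_zero] at hmpq; omega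
    · exact h0
  have hlt : p * (q - 1) < m := by
    by_contra hle
    push_neg at hle
    have : q ≤ q - 1 := (ceilDiv_le_iff_le_smul hppos).2 (by simpa using hle)
    omega
  -- valuations
  set v1 := padicValNat p (Nat.factorial (m - 1)) with hv1
  set v2 := padicValNat p (Nat.factorial r) with hv2
  set v3 := padicValNat p (Nat.factorial (q - 1)) with hv3
  -- v1 ≥ (q-1) + v3
  have key1 : q - 1 + v3 ≤ v1 := by
    have hdvd : Nat.factorial (p * (q - 1)) ∣ Nat.factorial (m - 1) :=
      Nat.factorial_dvd_factorial (by omega)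
    have hle : padicValNat p (Nat.factorial (p * (q - 1))) ≤ v1 := by
      rw [← padicValNat_dvd_iff_le (Nat.factorial_ne_zero _)] at *
      exact dvd_trans pow_padicValNat_dvd hdvd
    rw [padicValNat_factorial_mul] at hle
    omega
  -- v2 bound : v2 + k + 1 ≤ r + q
  have key2 : v2 + k + 1 ≤ r + q := by
    rcases le_or_gt r k with hrk | hrk
    · have hv20 : v2 = 0 := by
        apply padicValNat.eq_zero_of_not_dvd
        intro hd
        have := (Nat.Prime.dvd_factorial hp).1 hd
        omega
      omega
    · -- r > k, so r ≥ 1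
      have hrne : r ≠ 0 := by omega
      have hs : 1 ≤ (p.digits r).sum := by
        rcases Nat.eq_zero_or_pos (p.digits r).sum with h0 | h0
        · exfalso
          apply Nat.getLast_digit_ne_zero p hrne
          have hmem : (p.digits r).getLast (Nat.digits_ne_nil_iff_ne_zero.mpr hrne) ∈ p.digits r :=
            List.getLast_mem _
          exact List.sum_eq_zero_iff.mp h0 _ hmem
        · exact h0
      have hleg : (p - 1) * v2 = r - (p.digits r).sum :=
        sub_one_mul_padicValNat_factorial r
      have hsle : (p.digits r).sum ≤ r := Nat.digit_sum_le p r
      have hkv : k * v2 ≤ r - 1 := by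
        calc k * v2 ≤ (p - 1) * v2 := Nat.mul_le_mul_right _ (by omega)
        _ = r - (p.digits r).sum := hleg
        _ ≤ r - 1 := by omega
      rcases Nat.eq_zero_or_pos v2 with h0 | h0
      · omega
      · -- v2 ≥ 1: k*v2 ≥ (k-1) + v2 hence v2 ≤ r - k
        have h1 : (k - 1) * 1 ≤ (k - 1) * v2 := Nat.mul_le_mul_left _ h0
        have h2 : (k - 1) * v2 + v2 = k * v2 := by
          cases k with
          | zero => omega
          | succ n => simp [Nat.succ_mul]
        omega
  -- now compute the padicValRat
  have hpQ : (p : ℚ) ≠ 0 := by exact_mod_cast hppos.ne'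
  have hA : ((Nat.factorial (m-1) : ℚ)) ≠ 0 := by
    exact_mod_cast (Nat.factorial_ne_zero _)
  have hB : ((Nat.factorial r : ℚ)) ≠ 0 := by exact_mod_cast (Nat.factorial_ne_zero _)
  have hC : ((Nat.factorial (q-1) : ℚ)) ≠ 0 := by exact_mod_cast (Nat.factorial_ne_zero _)
  rw [padicValRat.div (by positivity) (by positivity),
      padicValRat.mul (by positivity) hA,
      padicValRat.mul hB hC,
      padicValRat.pow (p : ℚ), padicValRat.self hp.one_lt]
  simp only [padicValRat.of_nat]
  omega
end

section
/- Let R be a commutative ring and P(z) = ∑_{m≥1} r_m z^m/m! a formal power series with r_m ∈ R for all m ≥ 1 and r_1 = 1 (viewed as a power series over a ℚ-algebra containing R, or with divided-power coefficients). Then the compositional inverse of P has the form Q(z) = ∑_{m≥1} s_m z^m/m! with s_m ∈ R for all m ≥ 1. -/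
open PowerSeries

/-- Formal composition `f(a)` of power series, well-behaved when `a` has zero constant term:
the `n`-th coefficient is `∑_{m ≤ n} (coeff m f) * coeff n (a^m)`. -/
noncomputable def psComp {A : Type*} [CommRing A] (f a : PowerSeries A) : PowerSeries A :=
  PowerSeries.mk fun n => ∑ m ∈ Finset.range (n + 1), (coeff m f) * coeff n (a ^ m)


private lemma coeff_pow_lt {A : Type*} [CommRing A] (P : PowerSeries A)
    (hP0 : constantCoeff P = 0) :
    ∀ n k : ℕ, k < n → coeff k (P ^ n) = 0 := by
  intro n
  induction n with
  | zero => intro k hk; omega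
  | succ n ih =>
    intro k hk
    rw [pow_succ, coeff_mul]
    apply Finset.sum_eq_zero
    rintro ⟨i, j⟩ hij
    rw [Finset.HasAntidiagonal.mem_antidiagonal] at hij
    rcases lt_or_ge i n with h | h
    · rw [ih i h, zero_mul]
    · have : j = 0 := by omega
      subst this
      rw [coeff_zero_eq_constantCoeff, hP0, mul_zero]

private lemma coeff_pow_self {A : Type*} [CommRing A] (P : PowerSeries A)
    (hP0 : constantCoeff P = 0) :
    ∀ n : ℕ, coeff n (P ^ n) = (coeff 1 P) ^ n := by
  intro n
  induction n with
  | zero => simp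
  | succ n ih =>
    rw [pow_succ, coeff_mul]
    rw [Finset.sum_eq_single (n, 1)]
    · rw [ih, pow_succ]
    · rintro ⟨i, j⟩ hij hne
      rw [Finset.HasAntidiagonal.mem_antidiagonal] at hij
      rcases lt_or_ge i n with h | h
      · rw [coeff_pow_lt P hP0 n i h, zero_mul]
      · have : j = 0 := by
          rcases Nat.lt_or_ge j 1 with h' | h'
          · omega
          · exfalso; apply hne; have : i = n ∧ j = 1 := by omega
            simp [this.1, this.2]
        subst this
        rw [coeff_zero_eq_constantCoeff, hP0, mul_zero]
    · intro h
      exfalso; apply h; rw [Finset.HasAntidiagonal.mem_antidiagonal]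

private lemma fac_inv_cancel {A : Type*} [CommRing A] [Algebra ℚ A] (k : ℕ) :
    (k.factorial : A) * algebraMap ℚ A ((k.factorial : ℚ)⁻¹) = 1 := by
  rw [← map_natCast (algebraMap ℚ A), ← map_mul,
    mul_inv_cancel₀ (by exact_mod_cast k.factorial_ne_zero), map_one]

private lemma key {A : Type*} [CommRing A] [Algebra ℚ A] (R : Subring A) (P : PowerSeries A)
    (hP0 : constantCoeff P = 0)
    (hr : ∀ m : ℕ, 1 ≤ m → (Nat.factorial m : A) * coeff m P ∈ R) :
    ∀ m n : ℕ,
      (n.factorial : A) * algebraMap ℚ A ((m.factorial : ℚ)⁻¹) * coeff n (P ^ m) ∈ R := by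
  intro m
  induction m with
  | zero =>
    intro n
    rcases Nat.eq_zero_or_pos n with h | h
    · subst h; simpa using R.one_mem
    · rw [pow_zero, coeff_one, if_neg (by omega), mul_zero]
      exact R.zero_mem
  | succ m ih =>
    intro n
    cases n with
    | zero =>
      rw [coeff_zero_eq_constantCoeff, map_pow, hP0, zero_pow (Nat.succ_ne_zero m), mul_zero]
      exact R.zero_mem
    | succ n =>
      -- derivative identity
      have hder : (d⁄dX A) (P ^ (m + 1)) = (m + 1) • P ^ m • (d⁄dX A) P :=
        Derivation.leibniz_pow (d⁄dX A) P (m + 1)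
      rw [smul_eq_mul] at hder
      have hco : coeff (n + 1) (P ^ (m + 1)) * ((n : A) + 1)
          = ((m : A) + 1) * coeff n (P ^ m * (d⁄dX A) P) := by
        have h := congrArg (coeff n) hder
        rw [coeff_derivative, map_nsmul, nsmul_eq_mul] at h
        rw [h]; push_cast; ring
      have hS : coeff n (P ^ m * (d⁄dX A) P)
          = ∑ x ∈ Finset.HasAntidiagonal.antidiagonal n, coeff x.1 (P ^ m) * (coeff (x.2 + 1) P * (x.2 + 1)) := by
        rw [coeff_mul]
        exact Finset.sum_congr rfl fun x _ => by rw [coeff_derivative]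
      have goal_eq :
          ((n + 1).factorial : A) * algebraMap ℚ A (((m + 1).factorial : ℚ)⁻¹)
            * coeff (n + 1) (P ^ (m + 1))
          = ∑ x ∈ Finset.HasAntidiagonal.antidiagonal n,
              (n.choose x.1 : A)
                * ((x.1.factorial : A) * algebraMap ℚ A ((m.factorial : ℚ)⁻¹)
                    * coeff x.1 (P ^ m))
                * (((x.2 + 1).factorial : A) * coeff (x.2 + 1) P) := by
        have h1 : ((n + 1).factorial : A) = (n.factorial : A) * (n + 1) := by
          rw [Nat.factorial_succ]; push_cast; ring
        have h2 : algebraMap ℚ A (((m + 1).factorial : ℚ)⁻¹)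
            = algebraMap ℚ A ((m.factorial : ℚ)⁻¹) * algebraMap ℚ A (((m : ℚ) + 1)⁻¹) := by
          have hq : (((m + 1).factorial : ℕ) : ℚ) = ((m : ℚ) + 1) * (m.factorial : ℚ) := by
            rw [Nat.factorial_succ]; push_cast; ring
          rw [hq, mul_inv, map_mul, mul_comm]
        have h3 : algebraMap ℚ A (((m : ℚ) + 1)⁻¹) * ((m : A) + 1) = 1 := by
          have : ((m : A) + 1) = algebraMap ℚ A ((m : ℚ) + 1) := by push_cast; ring
          rw [this, ← map_mul, inv_mul_cancel₀ (by positivity), map_one]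
        calc ((n + 1).factorial : A) * algebraMap ℚ A (((m + 1).factorial : ℚ)⁻¹)
              * coeff (n + 1) (P ^ (m + 1))
            = (n.factorial : A) * algebraMap ℚ A ((m.factorial : ℚ)⁻¹)
              * (algebraMap ℚ A (((m : ℚ) + 1)⁻¹)
                * (coeff (n + 1) (P ^ (m + 1)) * ((n : A) + 1))) := by
              rw [h1, h2]; ring
          _ = (n.factorial : A) * algebraMap ℚ A ((m.factorial : ℚ)⁻¹)
              * (algebraMap ℚ A (((m : ℚ) + 1)⁻¹)
                * (((m : A) + 1) * coeff n (P ^ m * (d⁄dX A) P))) := by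
              rw [hco]
          _ = (n.factorial : A) * algebraMap ℚ A ((m.factorial : ℚ)⁻¹)
              * coeff n (P ^ m * (d⁄dX A) P) := by
              rw [← mul_assoc (algebraMap ℚ A (((m : ℚ) + 1)⁻¹)), h3, one_mul]
          _ = ∑ x ∈ Finset.HasAntidiagonal.antidiagonal n,
                (n.choose x.1 : A)
                  * ((x.1.factorial : A) * algebraMap ℚ A ((m.factorial : ℚ)⁻¹)
                      * coeff x.1 (P ^ m))
                  * (((x.2 + 1).factorial : A) * coeff (x.2 + 1) P) := by
              rw [hS, Finset.mul_sum]
              apply Finset.sum_congr rfl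
              rintro ⟨i, j⟩ hij
              rw [Finset.HasAntidiagonal.mem_antidiagonal] at hij
              have hfacn : n.factorial = n.choose i * i.factorial * j.factorial := by
                have h := Nat.choose_mul_factorial_mul_factorial (show i ≤ n by omega)
                rw [show n - i = j by omega] at h
                omega
              have hfac : (n.factorial : A) = (n.choose i : A) * i.factorial * j.factorial := by
                rw_mod_cast [hfacn]
              have hfac2 : ((j + 1).factorial : A) = (j.factorial : A) * (j + 1) := by
                rw [Nat.factorial_succ]; push_cast; ring
              rw [hfac, hfac2]
              push_cast
              ring
      rw [goal_eq]
      refine R.sum_mem fun x _ => ?_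
      obtain ⟨i, j⟩ := x
      exact R.mul_mem (R.mul_mem (natCast_mem R _) (ih i))
        (hr (j + 1) (Nat.succ_le_succ (Nat.zero_le j)))

/-- Let `R` be a subring of a `ℚ`-algebra `A` and `P(z) = ∑_{m≥1} r_m z^m/m!` a power series
with zero constant term, `r_m = m! · (coeff m P) ∈ R` for all `m ≥ 1` and `r_1 = 1`.
If `Q` is the compositional inverse of `P` (zero constant term, `Q(P(z)) = z`), then the
divided-power coefficients `s_m = m! · (coeff m Q)` also lie in `R` for all `m ≥ 1`. -/
theorem stmt1 (A : Type*) [CommRing A] [Algebra ℚ A] (R : Subring A)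
    (P Q : PowerSeries A)
    (hP0 : constantCoeff P = 0) (hQ0 : constantCoeff Q = 0)
    (hr : ∀ m : ℕ, 1 ≤ m → (Nat.factorial m : A) * coeff m P ∈ R)
    (hr1 : coeff 1 P = 1)
    (hinv : psComp Q P = (PowerSeries.X : PowerSeries A)) :
    ∀ m : ℕ, 1 ≤ m → (Nat.factorial m : A) * coeff m Q ∈ R := by
  intro m
  induction m using Nat.strong_induction_on with
  | _ n ih =>
    intro hn
    have hco : ∑ m ∈ Finset.range (n + 1), coeff m Q * coeff n (P ^ m)
        = (if n = 1 then (1 : A) else 0) := by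
      have h := congrArg (coeff n) hinv
      rwa [psComp, coeff_mk, coeff_X] at h
    rw [Finset.sum_range_succ, coeff_pow_self P hP0, hr1, one_pow, mul_one] at hco
    have hq : (n.factorial : A) * coeff n Q
        = (n.factorial : A) * (if n = 1 then (1 : A) else 0)
          - ∑ m ∈ Finset.range n,
              (n.factorial : A) * (coeff m Q * coeff n (P ^ m)) := by
      rw [← Finset.mul_sum, ← hco]; ring
    rw [hq]
    apply R.sub_mem
    · split
      · rw [mul_one]; exact natCast_mem R _
      · rw [mul_zero]; exact R.zero_mem
    · refine R.sum_mem fun k hk => ?_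
      rw [Finset.mem_range] at hk
      rcases Nat.eq_zero_or_pos k with h0 | h1
      · subst h0
        rw [coeff_zero_eq_constantCoeff, hQ0, zero_mul, mul_zero]
        exact R.zero_mem
      · have heq : (n.factorial : A) * (coeff k Q * coeff n (P ^ k))
            = ((k.factorial : A) * coeff k Q)
              * ((n.factorial : A) * algebraMap ℚ A ((k.factorial : ℚ)⁻¹)
                  * coeff n (P ^ k)) := by
          have h := fac_inv_cancel (A := A) k
          calc (n.factorial : A) * (coeff k Q * coeff n (P ^ k))
              = ((k.factorial : A) * algebraMap ℚ A ((k.factorial : ℚ)⁻¹))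
                * ((n.factorial : A) * (coeff k Q * coeff n (P ^ k))) := by
                rw [h, one_mul]
            _ = ((k.factorial : A) * coeff k Q)
              * ((n.factorial : A) * algebraMap ℚ A ((k.factorial : ℚ)⁻¹)
                  * coeff n (P ^ k)) := by ring
        rw [heq]
        exact R.mul_mem (ih k hk h1) (key R P hP0 hr k n)
end

section
/- Write the product representation exp(g(t)) = ∏_{k≥1} (1 + a_k t^k) for a power series g ∈ t·ℚ_p⟦t⟧, with a_k ∈ ℚ_p. Then exp(g(t)) ∈ ℤ_p⟦t⟧ if and only if a_k ∈ ℤ_p for all k ≥ 1. -/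
open PowerSeries

lemma aux_norm_coeff_prod {p : ℕ} [Fact p.Prime] (a : ℕ → ℚ_[p]) (s : Finset ℕ)
    (h : ∀ k ∈ s, ‖a k‖ ≤ 1) (m : ℕ) :
    ‖coeff m (∏ k ∈ s, (1 + PowerSeries.C (a k) * PowerSeries.X ^ k))‖ ≤ 1 := by
  induction s using Finset.induction generalizing m with
  | empty =>
      simp only [Finset.prod_empty, coeff_one]
      split <;> simp
  | @insert i s hi ih =>
      rw [Finset.prod_insert hi, coeff_mul]
      apply IsUltrametricDist.norm_sum_le_of_forall_le_of_nonneg zero_le_one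
      rintro ⟨x, y⟩ hxy
      rw [norm_mul]
      have h1 : ‖coeff x (1 + PowerSeries.C (a i) * PowerSeries.X ^ i)‖ ≤ 1 := by
        rw [map_add]
        refine (IsUltrametricDist.norm_add_le_max _ _).trans (max_le ?_ ?_)
        · rw [coeff_one]; split <;> simp
        · rw [coeff_C_mul, coeff_X_pow]
          split
          · simpa using h i (Finset.mem_insert_self i s)
          · simp
      have h2 := ih (fun k hk => h k (Finset.mem_insert_of_mem hk)) y
      calc ‖_‖ * ‖_‖ ≤ 1 * 1 := mul_le_mul h1 h2 (norm_nonneg _) zero_le_one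
        _ = 1 := mul_one 1

lemma aux_const {p : ℕ} [Fact p.Prime] (a : ℕ → ℚ_[p]) (m : ℕ) :
    constantCoeff (∏ k ∈ Finset.Icc 1 m,
      (1 + PowerSeries.C (a k) * PowerSeries.X ^ k)) = 1 := by
  rw [map_prod]
  apply Finset.prod_eq_one
  intro k hk
  have hk1 : k ≠ 0 := by have := (Finset.mem_Icc.mp hk).1; omega
  simp [constantCoeff_X, zero_pow hk1]

/-- Write `exp(g(t)) = ∏_{k≥1} (1 + a_k t^k)` (a `t`-adically convergent product) for
`g ∈ t·ℚ_p⟦t⟧`.  Then `exp(g(t)) ∈ ℤ_p⟦t⟧` iff `a_k ∈ ℤ_p` for all `k ≥ 1`. -/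
theorem stmt3 (p : ℕ) [hp : Fact p.Prime]
    (g : PowerSeries ℚ_[p]) (hg0 : constantCoeff g = 0)
    (a : ℕ → ℚ_[p])
    (hprod : ∀ n : ℕ, coeff n (psComp (PowerSeries.exp ℚ_[p]) g) =
      coeff n (∏ k ∈ Finset.Icc 1 n, (1 + PowerSeries.C (a k) *
        PowerSeries.X ^ k))) :
    (∀ n, ‖coeff n (psComp (PowerSeries.exp ℚ_[p]) g)‖ ≤ 1) ↔
    (∀ k, 1 ≤ k → ‖a k‖ ≤ 1) := by
  constructor
  · intro hf k hk
    induction k using Nat.strong_induction_on with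
    | _ k ih =>
      obtain ⟨m, rfl⟩ : ∃ m, k = m + 1 := ⟨k - 1, by omega⟩
      have ihm : ∀ j ∈ Finset.Icc 1 m, ‖a j‖ ≤ 1 := by
        intro j hj
        have := Finset.mem_Icc.mp hj
        exact ih j (by omega) (by omega)
      -- split the product
      have hins : Finset.Icc 1 (m + 1) = insert (m + 1) (Finset.Icc 1 m) := by
        ext x
        simp only [Finset.mem_Icc, Finset.mem_insert]
        omega
      have hkey : coeff (m + 1) (∏ k ∈ Finset.Icc 1 (m + 1),
          (1 + PowerSeries.C (a k) * PowerSeries.X ^ k)) =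
          coeff (m + 1) (∏ k ∈ Finset.Icc 1 m,
            (1 + PowerSeries.C (a k) * PowerSeries.X ^ k)) + a (m + 1) := by
        rw [hins, Finset.prod_insert (by simp), add_mul, one_mul, map_add, mul_assoc,
          coeff_C_mul]
        have hx := coeff_X_pow_mul (∏ k ∈ Finset.Icc 1 m,
          (1 + PowerSeries.C (a k) * PowerSeries.X ^ k)) (m + 1) 0
        rw [zero_add] at hx
        rw [hx, coeff_zero_eq_constantCoeff, aux_const, mul_one]
      have h1 := hf (m + 1)
      rw [hprod (m + 1), hkey] at h1
      have h2 := aux_norm_coeff_prod a (Finset.Icc 1 m) ihm (m + 1)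
      have : a (m + 1) = (coeff (m + 1) (∏ k ∈ Finset.Icc 1 m,
          (1 + PowerSeries.C (a k) * PowerSeries.X ^ k)) + a (m + 1)) -
          coeff (m + 1) (∏ k ∈ Finset.Icc 1 m,
          (1 + PowerSeries.C (a k) * PowerSeries.X ^ k)) := by ring
      rw [this]
      rw [sub_eq_add_neg]
      refine (IsUltrametricDist.norm_add_le_max _ _).trans ?_
      rw [norm_neg]
      exact max_le h1 h2
  · intro ha n
    rw [hprod n]
    exact aux_norm_coeff_prod a _ (fun k hk => ha k (Finset.mem_Icc.mp hk).1) n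
end
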